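/- (Uniqueness of the Gubinelli derivative for truly rough paths.) Let ω be α-Hölder and suppose there is a dense set A ⊂ [0,T) such that for every s ∈ A and every nonzero v ∈ ℝ^d, limsup_{t↓s} |v·ω_{s,t}|/(t−s)^{2α} = ∞. Then any controlled rough path θ with respect to ω has at most one Gubinelli derivative: if (∂_ω θ, R) and (∂'_ω θ, R') both satisfy θ_{s,t} = ∂_ω θ_s ω_{s,t} + R_{s,t} = ∂'_ω θ_s ω_{s,t} + R'_{s,t} with R, R' of order (t−s)^{α+β} and ∂_ω θ, ∂'_ω θ β-Hölder, then ∂_ω θ = ∂'_ω θ. -/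

import Mathlib

set_option maxHeartbeats 1000000


/-- uniqueness of the Gubinelli derivative for truly rough paths.
The truly rough condition is stated with exponent `α+β` (as sanctioned in the context),
i.e. for `s` in a dense subset of `[0,T)` and every nonzero `v`,
`limsup_{t↓s} |v·ω_{s,t}|/(t−s)^{α+β} = ∞`. -/
theorem gubinelli_derivative_unique {E : Type*} [NormedAddCommGroup E] [NormedSpace ℝ E]
    (d : ℕ) (T α β : ℝ) (hT : 0 < T) (hα1 : 1/3 < α) (hα2 : α < 1/2)
    (hβ1 : 1 - 2 * α < β) (hβ2 : β ≤ α)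
    (ω : ℝ → Fin d → ℝ) (A : Set ℝ)
    (hAsub : A ⊆ Set.Ico 0 T)
    (hAdense : ∀ s ∈ Set.Ico (0 : ℝ) T, ∀ ε > (0 : ℝ), ∃ a ∈ A, |a - s| < ε)
    (hrough : ∀ s ∈ A, ∀ v : Fin d → ℝ, v ≠ 0 → ∀ M : ℝ, ∀ ε > (0 : ℝ),
      ∃ t : ℝ, s < t ∧ t ≤ T ∧ t - s < ε ∧
        M * (t - s) ^ (α + β) < |∑ i, v i * (ω t i - ω s i)|)
    (θ : ℝ → E) (Dθ Dθ' : ℝ → Fin d → E) (Cβ Cβ' CR CR' : ℝ)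
    (hDβ : ∀ s t : ℝ, 0 ≤ s → s < t → t ≤ T → ‖Dθ t - Dθ s‖ ≤ Cβ * (t - s) ^ β)
    (hDβ' : ∀ s t : ℝ, 0 ≤ s → s < t → t ≤ T → ‖Dθ' t - Dθ' s‖ ≤ Cβ' * (t - s) ^ β)
    (hR : ∀ s t : ℝ, 0 ≤ s → s < t → t ≤ T →
      ‖θ t - θ s - ∑ i, (ω t i - ω s i) • Dθ s i‖ ≤ CR * (t - s) ^ (α + β))
    (hR' : ∀ s t : ℝ, 0 ≤ s → s < t → t ≤ T →
      ‖θ t - θ s - ∑ i, (ω t i - ω s i) • Dθ' s i‖ ≤ CR' * (t - s) ^ (α + β)) :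
    ∀ t : ℝ, 0 ≤ t → t ≤ T → Dθ t = Dθ' t := by
  have hβpos : 0 < β := by linarith
  -- Step 1: equality on A
  have hA : ∀ s ∈ A, Dθ s = Dθ' s := by
    intro s hs
    by_contra hne
    have hs0 : 0 ≤ s := (hAsub hs).1
    obtain ⟨i₀, hi₀⟩ : ∃ i, Dθ s i - Dθ' s i ≠ 0 := by
      by_contra h
      push_neg at h
      exact hne (funext fun i => sub_eq_zero.mp (h i))
    obtain ⟨f, hf1, hfx⟩ := exists_dual_vector ℝ _ (norm_ne_zero_iff.mpr hi₀)
    set v : Fin d → ℝ := fun i => f (Dθ s i - Dθ' s i) with hv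
    have hvne : v ≠ 0 := by
      intro h
      have : v i₀ = 0 := by rw [h]; rfl
      rw [hv] at this
      simp only at this
      have : (0 : ℝ) < ‖Dθ s i₀ - Dθ' s i₀‖ := norm_pos_iff.mpr hi₀
      have hfx' : f (Dθ s i₀ - Dθ' s i₀) = ‖Dθ s i₀ - Dθ' s i₀‖ := by
        simpa using hfx
      rw [hfx'] at *
      simp_all
    obtain ⟨t, hst, htT, _, hlt⟩ := hrough s hs v hvne (CR + CR') 1 one_pos
    have hpow : (0:ℝ) ≤ (t - s) ^ (α + β) := Real.rpow_nonneg (by linarith) _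
    -- bound on the difference of the controlled decompositions
    have hXX' : ‖(∑ i, (ω t i - ω s i) • Dθ s i) - ∑ i, (ω t i - ω s i) • Dθ' s i‖
        ≤ (CR + CR') * (t - s) ^ (α + β) := by
      have h1 := hR s t hs0 hst htT
      have h2 := hR' s t hs0 hst htT
      calc ‖(∑ i, (ω t i - ω s i) • Dθ s i) - ∑ i, (ω t i - ω s i) • Dθ' s i‖
          = ‖(θ t - θ s - ∑ i, (ω t i - ω s i) • Dθ' s i)
              - (θ t - θ s - ∑ i, (ω t i - ω s i) • Dθ s i)‖ := by
            congr 1; abel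
        _ ≤ ‖θ t - θ s - ∑ i, (ω t i - ω s i) • Dθ' s i‖
              + ‖θ t - θ s - ∑ i, (ω t i - ω s i) • Dθ s i‖ := norm_sub_le _ _
        _ ≤ CR' * (t - s) ^ (α + β) + CR * (t - s) ^ (α + β) := add_le_add h2 h1
        _ = (CR + CR') * (t - s) ^ (α + β) := by ring
    have hsum : (∑ i, v i * (ω t i - ω s i))
        = f ((∑ i, (ω t i - ω s i) • Dθ s i) - ∑ i, (ω t i - ω s i) • Dθ' s i) := by
      rw [← Finset.sum_sub_distrib]
      simp only [← smul_sub]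
      rw [map_sum]
      congr 1
      ext i
      rw [map_smul]
      simp [hv, mul_comm]
    have hfb : |∑ i, v i * (ω t i - ω s i)|
        ≤ ‖(∑ i, (ω t i - ω s i) • Dθ s i) - ∑ i, (ω t i - ω s i) • Dθ' s i‖ := by
      rw [hsum]
      calc |f _| ≤ ‖f‖ * ‖_‖ := f.le_opNorm _
        _ = _ := by rw [hf1, one_mul]
    linarith [hfb.trans hXX']
  -- Step 2: extend by density and Hölder continuity
  intro t ht0 htT
  have key : ∀ ε > (0:ℝ), ‖Dθ t - Dθ' t‖ ≤ ε := by
    intro ε hε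
    set C : ℝ := |Cβ| + |Cβ'| with hC
    have hC0 : 0 ≤ C := by positivity
    set δ : ℝ := (ε / (C + 1)) ^ (1 / β) with hδ
    have hδpos : 0 < δ := Real.rpow_pos_of_pos (by positivity) _
    have hδβ : δ ^ β = ε / (C + 1) := by
      rw [hδ, ← Real.rpow_mul (by positivity), one_div_mul_cancel (ne_of_gt hβpos),
        Real.rpow_one]
    -- find a ∈ A with |a - t| < δ
    obtain ⟨a, haA, hat⟩ : ∃ a ∈ A, |a - t| < δ := by
      rcases lt_or_eq_of_le htT with h | h
      · exact hAdense t ⟨ht0, h⟩ δ hδpos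
      · -- t = T; approximate T from below
        set s := max 0 (T - δ/2) with hsdef
        have hsIco : s ∈ Set.Ico (0:ℝ) T := by
          constructor
          · exact le_max_left _ _
          · rw [hsdef]; apply max_lt hT (by linarith)
        obtain ⟨a, haA, has⟩ := hAdense s hsIco (δ/2) (by linarith)
        refine ⟨a, haA, ?_⟩
        have hsT : |s - t| ≤ δ/2 := by
          rw [h, abs_le]
          constructor
          · have : T - δ/2 ≤ s := le_max_right _ _
            linarith
          · have : s < T := hsIco.2
            linarith
        calc |a - t| ≤ |a - s| + |s - t| := by
              have := abs_sub_le a s t; linarith [abs_sub_le a s t]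
          _ < δ/2 + δ/2 := by linarith [hsT]
          _ = δ := by ring
    have haeq : Dθ a = Dθ' a := hA a haA
    have ha0 : 0 ≤ a := (hAsub haA).1
    have haT : a < T := (hAsub haA).2
    have bound : ∀ u : ℝ, 0 < u → u < δ → C * u ^ β ≤ ε := by
      intro u hu huδ
      have h1 : u ^ β ≤ δ ^ β :=
        Real.rpow_le_rpow (le_of_lt hu) (le_of_lt huδ) (le_of_lt hβpos)
      have h2 : C * u ^ β ≤ C * δ ^ β := mul_le_mul_of_nonneg_left h1 hC0
      have h3 : C * (ε / (C + 1)) ≤ ε := by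
        rw [mul_div_assoc', div_le_iff₀ (by positivity : (0:ℝ) < C + 1)]
        nlinarith [hε.le]
      calc C * u ^ β ≤ C * δ ^ β := h2
        _ = C * (ε / (C + 1)) := by rw [hδβ]
        _ ≤ ε := h3
    rcases lt_trichotomy a t with hlt | heq | hgt
    · have h1 := hDβ a t ha0 hlt htT
      have h2 := hDβ' a t ha0 hlt htT
      have hδu : t - a < δ := by
        rw [abs_lt] at hat; linarith [hat.1]
      have : ‖Dθ t - Dθ' t‖ ≤ Cβ * (t - a) ^ β + Cβ' * (t - a) ^ β := by
        calc ‖Dθ t - Dθ' t‖ = ‖(Dθ t - Dθ a) - (Dθ' t - Dθ' a)‖ := by rw [haeq]; congr 1; abel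
          _ ≤ ‖Dθ t - Dθ a‖ + ‖Dθ' t - Dθ' a‖ := norm_sub_le _ _
          _ ≤ Cβ * (t - a) ^ β + Cβ' * (t - a) ^ β := add_le_add h1 h2
      have hp : (0:ℝ) ≤ (t - a) ^ β := Real.rpow_nonneg (by linarith) _
      have hCb : Cβ * (t - a) ^ β + Cβ' * (t - a) ^ β ≤ C * (t - a) ^ β := by
        have := le_abs_self Cβ
        have := le_abs_self Cβ'
        nlinarith
      have := bound (t - a) (by linarith) hδu
      linarith
    · rw [heq] at haeq
      rw [haeq]
      simp [hε.le]
    · have h1 := hDβ t a ht0 hgt (le_of_lt haT)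
      have h2 := hDβ' t a ht0 hgt (le_of_lt haT)
      have hδu : a - t < δ := by
        rw [abs_lt] at hat; linarith [hat.2]
      have : ‖Dθ t - Dθ' t‖ ≤ Cβ * (a - t) ^ β + Cβ' * (a - t) ^ β := by
        calc ‖Dθ t - Dθ' t‖ = ‖(Dθ' a - Dθ' t) - (Dθ a - Dθ t)‖ := by rw [haeq]; congr 1; abel
          _ ≤ ‖Dθ' a - Dθ' t‖ + ‖Dθ a - Dθ t‖ := norm_sub_le _ _
          _ ≤ Cβ' * (a - t) ^ β + Cβ * (a - t) ^ β := add_le_add h2 h1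
          _ = Cβ * (a - t) ^ β + Cβ' * (a - t) ^ β := by ring
      have hp : (0:ℝ) ≤ (a - t) ^ β := Real.rpow_nonneg (by linarith) _
      have hCb : Cβ * (a - t) ^ β + Cβ' * (a - t) ^ β ≤ C * (a - t) ^ β := by
        have := le_abs_self Cβ
        have := le_abs_self Cβ'
        nlinarith
      have := bound (a - t) (by linarith) hδu
      linarith
  have hnorm : ‖Dθ t - Dθ' t‖ = 0 := by
    by_contra h
    have hpos : 0 < ‖Dθ t - Dθ' t‖ := lt_of_le_of_ne (norm_nonneg _) (Ne.symm h)
    have := key (‖Dθ t - Dθ' t‖ / 2) (by linarith)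
    linarith
  exact sub_eq_zero.mp (norm_eq_zero.mp hnorm)
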